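/- Let m ≥ 1 be an integer and q_m(μ) = 6 + (11(m−1)/2)μ + (3m(m−3)/2)μ² + ((m−1)(m²−5m−2)/8)μ³. For m ≥ 6, q_m(μ) > 0 for all μ > 0. For 1 ≤ m ≤ 5, q_m has exactly one positive root μ_m, and for μ > 0 one has q_m(μ) ≥ 0 if and only if μ ≤ μ_m. Moreover μ₁ = √2, μ₂ = (1+√7)/2, μ₃ = 1+√(5/2), μ₄ = 2+√6, μ₅ = 8+√70, and μ₁ < μ₂ < μ₃ < μ₄ < μ₅. -/
import Mathlib


/-- `q_m(μ) = P_μ^m(1/2)` for the type `I_{1,3}` representative polynomial. -/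
noncomputable def qI13 (m : ℕ) (μ : ℝ) : ℝ :=
  6 + (11 * ((m : ℝ) - 1) / 2) * μ + (3 * (m : ℝ) * ((m : ℝ) - 3) / 2) * μ ^ 2 +
    (((m : ℝ) - 1) * ((m : ℝ) ^ 2 - 5 * (m : ℝ) - 2) / 8) * μ ^ 3

/-- If `qI13 m` factors as `(r - μ) * G μ` with `G` positive on positives, then `r` is the
unique positive root and characterizes the sign. -/
lemma ofKey {m : ℕ} {r : ℝ} (hr : 0 < r) (G : ℝ → ℝ)
    (key : ∀ μ : ℝ, 0 < μ → qI13 m μ = (r - μ) * G μ ∧ 0 < G μ) :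
    (∃! x : ℝ, 0 < x ∧ qI13 m x = 0) ∧
    ∀ x : ℝ, 0 < x → qI13 m x = 0 → ∀ μ : ℝ, 0 < μ → (0 ≤ qI13 m μ ↔ μ ≤ x) := by
  have root : qI13 m r = 0 := by
    obtain ⟨h, _⟩ := key r hr; rw [h]; ring
  have uniq : ∀ x : ℝ, 0 < x → qI13 m x = 0 → x = r := by
    intro x hx hq
    obtain ⟨h, hG⟩ := key x hx
    rw [h] at hq
    rcases mul_eq_zero.1 hq with h' | h'
    · linarith [sub_eq_zero.1 h']
    · exact absurd h' hG.ne'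
  refine ⟨⟨r, ⟨hr, root⟩, fun y hy => uniq y hy.1 hy.2⟩, ?_⟩
  intro x hx hqx μ hμ
  obtain rfl := uniq x hx hqx
  obtain ⟨h, hG⟩ := key μ hμ
  rw [h]
  constructor
  · intro hge; nlinarith
  · intro hle; exact mul_nonneg (by linarith) hG.le

lemma s7 : (1:ℝ) < Real.sqrt 7 := (Real.lt_sqrt (by norm_num)).2 (by norm_num)
lemma s52 : (1:ℝ) < Real.sqrt (5/2) := (Real.lt_sqrt (by norm_num)).2 (by norm_num)
lemma s6 : (2:ℝ) < Real.sqrt 6 := (Real.lt_sqrt (by norm_num)).2 (by norm_num)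
lemma s70 : (8:ℝ) < Real.sqrt 70 := (Real.lt_sqrt (by norm_num)).2 (by norm_num)
lemma sq2 : Real.sqrt 2 ^ 2 = 2 := Real.sq_sqrt (by norm_num)
lemma sq7 : Real.sqrt 7 ^ 2 = 7 := Real.sq_sqrt (by norm_num)
lemma sq52 : Real.sqrt (5/2) ^ 2 = 5/2 := Real.sq_sqrt (by norm_num)
lemma sq6 : Real.sqrt 6 ^ 2 = 6 := Real.sq_sqrt (by norm_num)
lemma sq70 : Real.sqrt 70 ^ 2 = 70 := Real.sq_sqrt (by norm_num)

lemma key1 : ∀ μ : ℝ, 0 < μ →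
    qI13 1 μ = (Real.sqrt 2 - μ) * (3 * (Real.sqrt 2 + μ)) ∧ 0 < 3 * (Real.sqrt 2 + μ) := by
  intro μ hμ
  constructor
  · simp only [qI13]; push_cast; linear_combination (-3 : ℝ) * sq2
  · nlinarith [Real.sqrt_nonneg 2]

lemma key2 : ∀ μ : ℝ, 0 < μ →
    qI13 2 μ = ((1 + Real.sqrt 7) / 2 - μ) * ((μ - (1 - Real.sqrt 7) / 2) * (μ + 4)) ∧
      0 < (μ - (1 - Real.sqrt 7) / 2) * (μ + 4) := by
  intro μ hμ
  constructor
  · simp only [qI13]; push_cast; linear_combination (-(μ + 4) / 4) * sq7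
  · have := s7; nlinarith

lemma key3 : ∀ μ : ℝ, 0 < μ →
    qI13 3 μ = (1 + Real.sqrt (5/2) - μ) * (2 * (μ - (1 - Real.sqrt (5/2))) * (μ + 2)) ∧
      0 < 2 * (μ - (1 - Real.sqrt (5/2))) * (μ + 2) := by
  intro μ hμ
  constructor
  · simp only [qI13]; push_cast; linear_combination (-2 * (μ + 2)) * sq52
  · have := s52; nlinarith

lemma key4 : ∀ μ : ℝ, 0 < μ →
    qI13 4 μ = (2 + Real.sqrt 6 - μ) * ((3/4) * (μ - (2 - Real.sqrt 6)) * (3 * μ + 4)) ∧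
      0 < (3/4) * (μ - (2 - Real.sqrt 6)) * (3 * μ + 4) := by
  intro μ hμ
  constructor
  · simp only [qI13]; push_cast; linear_combination (-(3/4) * (3 * μ + 4)) * sq6
  · have := s6; nlinarith

lemma key5 : ∀ μ : ℝ, 0 < μ →
    qI13 5 μ = (8 + Real.sqrt 70 - μ) * ((μ - (8 - Real.sqrt 70)) * (μ + 1)) ∧
      0 < (μ - (8 - Real.sqrt 70)) * (μ + 1) := by
  intro μ hμ
  constructor
  · simp only [qI13]; push_cast; linear_combination (-(μ + 1)) * sq70
  · have := s70; nlinarith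

/-- Sign of `q_m` for type `I_{1,3}`: positivity for `m ≥ 6`; for `1 ≤ m ≤ 5`
a unique positive root `μ_m` characterizing the sign, with explicit values
`μ₁ = √2 < μ₂ = (1+√7)/2 < μ₃ = 1+√(5/2) < μ₄ = 2+√6 < μ₅ = 8+√70`. -/
theorem qI13_sign :
    (∀ m : ℕ, 6 ≤ m → ∀ μ : ℝ, 0 < μ → 0 < qI13 m μ) ∧
    (∀ m : ℕ, 1 ≤ m → m ≤ 5 → ∃! r : ℝ, 0 < r ∧ qI13 m r = 0) ∧
    (∀ m : ℕ, 1 ≤ m → m ≤ 5 → ∀ r : ℝ, 0 < r → qI13 m r = 0 →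
      ∀ μ : ℝ, 0 < μ → (0 ≤ qI13 m μ ↔ μ ≤ r)) ∧
    qI13 1 (Real.sqrt 2) = 0 ∧
    qI13 2 ((1 + Real.sqrt 7) / 2) = 0 ∧
    qI13 3 (1 + Real.sqrt (5 / 2)) = 0 ∧
    qI13 4 (2 + Real.sqrt 6) = 0 ∧
    qI13 5 (8 + Real.sqrt 70) = 0 ∧
    Real.sqrt 2 < (1 + Real.sqrt 7) / 2 ∧
    (1 + Real.sqrt 7) / 2 < 1 + Real.sqrt (5 / 2) ∧
    1 + Real.sqrt (5 / 2) < 2 + Real.sqrt 6 ∧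
    2 + Real.sqrt 6 < 8 + Real.sqrt 70 := by
  have r1 : (0:ℝ) < Real.sqrt 2 := Real.sqrt_pos.2 (by norm_num)
  have r2 : (0:ℝ) < (1 + Real.sqrt 7) / 2 := by have := s7; linarith
  have r3 : (0:ℝ) < 1 + Real.sqrt (5/2) := by have := s52; linarith
  have r4 : (0:ℝ) < 2 + Real.sqrt 6 := by have := s6; linarith
  have r5 : (0:ℝ) < 8 + Real.sqrt 70 := by have := s70; linarith
  have K1 := ofKey r1 _ key1
  have K2 := ofKey r2 _ key2
  have K3 := ofKey r3 _ key3
  have K4 := ofKey r4 _ key4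
  have K5 := ofKey r5 _ key5
  refine ⟨?_, ?_, ?_, ?_, ?_, ?_, ?_, ?_, ?_, ?_, ?_, ?_⟩
  · intro m hm μ hμ
    have hM : (6:ℝ) ≤ (m:ℝ) := by exact_mod_cast hm
    have t1 : 0 ≤ (11 * ((m:ℝ) - 1) / 2) * μ := mul_nonneg (by nlinarith) hμ.le
    have t2 : 0 ≤ (3 * (m:ℝ) * ((m:ℝ) - 3) / 2) * μ ^ 2 :=
      mul_nonneg (by nlinarith) (by positivity)
    have t3 : 0 ≤ (((m:ℝ) - 1) * ((m:ℝ) ^ 2 - 5 * (m:ℝ) - 2) / 8) * μ ^ 3 := by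
      have h2 : 0 ≤ (m:ℝ) ^ 2 - 5 * (m:ℝ) - 2 := by nlinarith [sq_nonneg ((m:ℝ) - 6)]
      exact mul_nonneg (by nlinarith) (by positivity)
    simp only [qI13]; linarith
  · intro m h1 h5
    interval_cases m
    · exact K1.1
    · exact K2.1
    · exact K3.1
    · exact K4.1
    · exact K5.1
  · intro m h1 h5
    interval_cases m
    · exact K1.2
    · exact K2.2
    · exact K3.2
    · exact K4.2
    · exact K5.2
  · rw [(key1 _ r1).1]; ring
  · rw [(key2 _ r2).1]; ring
  · rw [(key3 _ r3).1]; ring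
  · rw [(key4 _ r4).1]; ring
  · rw [(key5 _ r5).1]; ring
  · have a : Real.sqrt 2 < 1.5 := by nlinarith [sq2, Real.sqrt_nonneg 2]
    have b : (2.6:ℝ) < Real.sqrt 7 := (Real.lt_sqrt (by norm_num)).2 (by norm_num)
    linarith
  · have a : Real.sqrt 7 < 2.7 := by nlinarith [sq7, Real.sqrt_nonneg 7]
    have b : (1.5:ℝ) < Real.sqrt (5/2) := (Real.lt_sqrt (by norm_num)).2 (by norm_num)
    linarith
  · have a : Real.sqrt (5/2) < 1.6 := by nlinarith [sq52, Real.sqrt_nonneg (5/2)]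
    have b := s6
    linarith
  · have a : Real.sqrt 6 < 2.5 := by nlinarith [sq6, Real.sqrt_nonneg 6]
    have b := s70
    linarith
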